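/- (Cost increase bound of the candidate solution.) Let ρ ∈ (0,1), w̄ ≥ 0, and α_u ∈ K_∞ of the form α_u(c) = α_c(c·M) where α_c(c) = Σ_j a_j c^j has nonnegative coefficients and M := √(1/c_l + κ_max). Then Σ_{k=0}^{N−1} α_u(ρ^k w̄) ≤ α_{c,ρ}(w̄ M), where α_{c,ρ}(c) := Σ_{k=0}^∞ α_c(ρ^k c), and consequently the total cost increase Σ_{k=0}^{N−1} α_u(ρ^k w̄) + α_f(ρ^N w̄/√c_l) ≤ α_f(w̄/√c_l) + α_{c,ρ}(w̄ M) holds for any α_f ∈ K_∞ and all N ≥ 0. -/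

import Mathlib

/-- cost increase bound of the candidate solution,
Part VI of the proof of Theorem 1. -/
theorem stmt_19 (a : ℕ → ℝ) (ha : ∀ j, 0 ≤ a j)
    (ρ : ℝ) (hρ0 : 0 < ρ) (hρ1 : ρ < 1)
    (cl κmax wbar : ℝ) (hcl : 0 < cl) (hκmax : 0 < κmax) (hwbar : 0 ≤ wbar)
    (hsum : ∀ c : ℝ, 0 ≤ c → Summable (fun j : ℕ => a j * c ^ j))
    (hsumk : Summable (fun k : ℕ =>
      ∑' j : ℕ, a j * (ρ ^ k * (wbar * Real.sqrt (1 / cl + κmax))) ^ j))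
    (αf : ℝ → ℝ)
    (hαfK : ContinuousOn αf (Set.Ici 0) ∧ StrictMonoOn αf (Set.Ici 0) ∧
      αf 0 = 0 ∧ Filter.Tendsto αf Filter.atTop Filter.atTop)
    (N : ℕ) :
    (∑ k ∈ Finset.range N,
        ∑' j : ℕ, a j * ((ρ ^ k * wbar) * Real.sqrt (1 / cl + κmax)) ^ j)
      ≤ (∑' k : ℕ, ∑' j : ℕ, a j * (ρ ^ k * (wbar * Real.sqrt (1 / cl + κmax))) ^ j) ∧
    (∑ k ∈ Finset.range N,
        ∑' j : ℕ, a j * ((ρ ^ k * wbar) * Real.sqrt (1 / cl + κmax)) ^ j)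
      + αf (ρ ^ N * wbar / Real.sqrt cl)
      ≤ αf (wbar / Real.sqrt cl)
        + ∑' k : ℕ, ∑' j : ℕ, a j * (ρ ^ k * (wbar * Real.sqrt (1 / cl + κmax))) ^ j := by
  have hρN : ρ ^ N ≤ 1 := pow_le_one₀ hρ0.le hρ1.le
  have hρNpos : 0 < ρ ^ N := pow_pos hρ0 N
  have hsqrt : 0 < Real.sqrt cl := Real.sqrt_pos.mpr hcl
  have heq : ∀ k : ℕ, ((ρ ^ k * wbar) * Real.sqrt (1 / cl + κmax))
      = ρ ^ k * (wbar * Real.sqrt (1 / cl + κmax)) := fun k => mul_assoc _ _ _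
  have h1 : (∑ k ∈ Finset.range N,
        ∑' j : ℕ, a j * ((ρ ^ k * wbar) * Real.sqrt (1 / cl + κmax)) ^ j)
      ≤ (∑' k : ℕ, ∑' j : ℕ, a j * (ρ ^ k * (wbar * Real.sqrt (1 / cl + κmax))) ^ j) := by
    simp only [heq]
    refine Summable.sum_le_tsum _ (fun k _ => tsum_nonneg fun j => ?_) hsumk
    have hc : 0 ≤ ρ ^ k * (wbar * Real.sqrt (1 / cl + κmax)) :=
      mul_nonneg (pow_pos hρ0 k).le (mul_nonneg hwbar (Real.sqrt_nonneg _))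
    exact mul_nonneg (ha j) (pow_nonneg hc j)
  refine ⟨h1, ?_⟩
  have hαf : αf (ρ ^ N * wbar / Real.sqrt cl) ≤ αf (wbar / Real.sqrt cl) := by
    have hm := hαfK.2.1.monotoneOn
    have hx : (0:ℝ) ≤ ρ ^ N * wbar / Real.sqrt cl :=
      div_nonneg (mul_nonneg hρNpos.le hwbar) hsqrt.le
    have hy : (0:ℝ) ≤ wbar / Real.sqrt cl := div_nonneg hwbar hsqrt.le
    refine hm hx hy ?_
    have : ρ ^ N * wbar ≤ wbar := by nlinarith
    gcongr
  linarith
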